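/- Let μ be a probability measure on ℝ with continuous and strictly increasing cumulative distribution function F : ℝ → (0,1), finite first moment, and quantile function F⁻¹ : (0,1) → ℝ (the inverse of F). Then for every y ∈ ℝ, ∫₀¹ 2·(κ − 1_{y < F⁻¹(κ)})·(y − F⁻¹(κ)) dκ = ∫_ℝ (F(t) − 1_{t ≥ y})² dt, i.e., the quantile (pinball) loss integral over quantile levels κ ∈ (0,1) equals CRPS(F, y). -/

import Mathlib

open MeasureTheory
open Set

lemma crps_map_F (μ : Measure ℝ) [IsProbabilityMeasure μ] (F Finv : ℝ → ℝ)
    (hF : ∀ t, F t = (μ (Set.Iic t)).toReal)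
    (hFmono : StrictMono F)
    (hFrange : ∀ t, F t ∈ Set.Ioo (0 : ℝ) 1)
    (hFcont : Continuous F)
    (hInv2 : ∀ κ ∈ Set.Ioo (0 : ℝ) 1, F (Finv κ) = κ) :
    Measure.map F μ = volume.restrict (Set.Ioo 0 1) := by
  have hFm : Measurable F := hFcont.measurable
  have := Measure.isProbabilityMeasure_map (μ := μ) hFm.aemeasurable
  have hIic : ∀ t, μ (Iic t) = ENNReal.ofReal (F t) := by
    intro t
    rw [hF t, ENNReal.ofReal_toReal (measure_ne_top μ _)]
  refine Measure.ext_of_Iic _ _ (fun a => ?_)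
  rw [Measure.map_apply hFm measurableSet_Iic, Measure.restrict_apply measurableSet_Iic]
  rcases le_or_gt a 0 with h0 | h0
  · have h1 : F ⁻¹' Iic a = ∅ := by
      ext x; simp only [mem_preimage, mem_Iic, mem_empty_iff_false, iff_false, not_le]
      exact lt_of_le_of_lt h0 (hFrange x).1
    have h2 : Iic a ∩ Ioo (0:ℝ) 1 = ∅ := by
      ext u; simp only [mem_inter_iff, mem_Iic, mem_Ioo, mem_empty_iff_false, iff_false]
      rintro ⟨hu, hu0, -⟩; exact absurd (lt_of_le_of_lt h0 hu0) (not_lt.2 hu)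
    simp [h1, h2]
  rcases lt_or_ge a 1 with h1 | h1
  · have hpre : F ⁻¹' Iic a = Iic (Finv a) := by
      ext x
      simp only [mem_preimage, mem_Iic]
      constructor
      · intro h; rw [← hInv2 a ⟨h0, h1⟩] at h; exact hFmono.le_iff_le.mp h
      · intro h; rw [← hInv2 a ⟨h0, h1⟩]; exact hFmono.monotone h
    have hset : Iic a ∩ Ioo (0:ℝ) 1 = Ioc 0 a := by
      ext u
      simp only [mem_inter_iff, mem_Iic, mem_Ioo, mem_Ioc]
      constructor
      · rintro ⟨hu, hu0, -⟩; exact ⟨hu0, hu⟩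
      · rintro ⟨hu0, hu⟩; exact ⟨hu, hu0, lt_of_le_of_lt hu h1⟩
    rw [hpre, hset, hIic, hInv2 a ⟨h0, h1⟩, Real.volume_Ioc, sub_zero]
  · have hpre : F ⁻¹' Iic a = univ := by
      ext x; simp only [mem_preimage, mem_Iic, mem_univ, iff_true]
      exact le_trans (hFrange x).2.le h1
    have hset : Iic a ∩ Ioo (0:ℝ) 1 = Ioo 0 1 := by
      apply inter_eq_self_of_subset_right
      intro u hu; exact le_trans hu.2.le h1
    rw [hpre, hset]
    simp [Real.volume_Ioo]


lemma crps_unif1 {c : ℝ} (h0 : 0 < c) (h1 : c < 1) :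
    ∫ u in Set.Ioo (0:ℝ) 1, (if u ≤ c then 2*u else 0) = c^2 := by
  have hunion : Ioc (0:ℝ) c ∪ Ioo c 1 = Ioo 0 1 := Ioc_union_Ioo_eq_Ioo h0.le h1
  have hdisj : Disjoint (Ioc (0:ℝ) c) (Ioo c 1) := by
    apply Set.disjoint_left.mpr
    rintro u ⟨-, huc⟩ ⟨hcu, -⟩; exact absurd huc (not_le.2 hcu)
  have hint1 : IntegrableOn (fun u => if u ≤ c then 2*u else 0) (Ioc (0:ℝ) c) := by
    apply Integrable.congr ((by fun_prop : Continuous (fun u:ℝ => 2*u)).integrableOn_Ioc)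
    filter_upwards [ae_restrict_mem measurableSet_Ioc] with u hu
    rw [if_pos hu.2]
  have hint2 : IntegrableOn (fun u => if u ≤ c then 2*u else 0) (Ioo c 1) := by
    apply Integrable.congr (integrableOn_zero : IntegrableOn (fun _ => (0:ℝ)) (Ioo c 1) volume)
    filter_upwards [ae_restrict_mem measurableSet_Ioo] with u hu
    rw [if_neg (not_le.2 hu.1)]
  rw [← hunion, setIntegral_union hdisj measurableSet_Ioo hint1 hint2]
  have e1 : ∫ u in Ioc (0:ℝ) c, (if u ≤ c then 2*u else 0) = ∫ u in Ioc (0:ℝ) c, 2*u := by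
    apply setIntegral_congr_fun measurableSet_Ioc
    intro u hu; simp only [if_pos hu.2]
  have e2 : ∫ u in Ioo c (1:ℝ), (if u ≤ c then 2*u else 0) = 0 := by
    rw [setIntegral_congr_fun measurableSet_Ioo (g := fun _ => (0:ℝ))
      (fun u hu => if_neg (not_le.2 hu.1))]
    simp
  rw [e1, e2, ← intervalIntegral.integral_of_le h0.le]
  rw [intervalIntegral.integral_const_mul, integral_id]
  ring

lemma crps_unif2 {c : ℝ} (h0 : 0 < c) (h1 : c < 1) :
    ∫ u in Set.Ioo (0:ℝ) 1, (if c < u then 2*(1-u) else 0) = (1-c)^2 := by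
  have hunion : Ioc (0:ℝ) c ∪ Ioo c 1 = Ioo 0 1 := Ioc_union_Ioo_eq_Ioo h0.le h1
  have hdisj : Disjoint (Ioc (0:ℝ) c) (Ioo c 1) := by
    apply Set.disjoint_left.mpr
    rintro u ⟨-, huc⟩ ⟨hcu, -⟩; exact absurd huc (not_le.2 hcu)
  have hint1 : IntegrableOn (fun u => if c < u then 2*(1-u) else 0) (Ioc (0:ℝ) c) := by
    apply Integrable.congr (integrableOn_zero : IntegrableOn (fun _ => (0:ℝ)) (Ioc 0 c) volume)
    filter_upwards [ae_restrict_mem measurableSet_Ioc] with u hu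
    rw [if_neg (not_lt.2 hu.2)]
  have hint2 : IntegrableOn (fun u => if c < u then 2*(1-u) else 0) (Ioo c 1) := by
    apply Integrable.congr (((by fun_prop : Continuous (fun u:ℝ => 2*(1-u))).integrableOn_Icc.mono_set Ioo_subset_Icc_self))
    filter_upwards [ae_restrict_mem measurableSet_Ioo] with u hu
    rw [if_pos hu.1]
  rw [← hunion, setIntegral_union hdisj measurableSet_Ioo hint1 hint2]
  have e1 : ∫ u in Ioc (0:ℝ) c, (if c < u then 2*(1-u) else 0) = 0 := by
    rw [setIntegral_congr_fun measurableSet_Ioc (g := fun _ => (0:ℝ))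
      (fun u hu => if_neg (not_lt.2 hu.2))]
    simp
  have e2 : ∫ u in Ioo c (1:ℝ), (if c < u then 2*(1-u) else 0) = ∫ u in Ioo c 1, 2*(1-u) := by
    apply setIntegral_congr_fun measurableSet_Ioo
    intro u hu; simp only [if_pos hu.1]
  rw [e1, e2, ← integral_Ioc_eq_integral_Ioo, ← intervalIntegral.integral_of_le h1.le]
  have : ∫ u in c..(1:ℝ), 2*(1-u) = ∫ u in c..(1:ℝ), (2 - 2*u) := by
    congr 1; ext u; ring
  rw [this, intervalIntegral.integral_sub intervalIntegrable_const
    ((intervalIntegral.intervalIntegrable_id).const_mul 2),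
    intervalIntegral.integral_const, intervalIntegral.integral_const_mul, integral_id,
    smul_eq_mul]
  ring


/-- The quantile (pinball) loss integral over quantile levels equals the CRPS. -/
theorem quantile_loss_eq_crps (μ : Measure ℝ) [IsProbabilityMeasure μ]
    (F Finv : ℝ → ℝ)
    (hF : ∀ t, F t = (μ (Set.Iic t)).toReal)
    (hFcont : Continuous F)
    (hFmono : StrictMono F)
    (hFrange : ∀ t, F t ∈ Set.Ioo (0 : ℝ) 1)
    (hInt : Integrable id μ)
    (hInv1 : ∀ t, Finv (F t) = t)
    (hInv2 : ∀ κ ∈ Set.Ioo (0 : ℝ) 1, F (Finv κ) = κ)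
    (y : ℝ) :
    (∫ κ in Set.Ioo (0 : ℝ) 1,
        2 * ((κ - (if y < Finv κ then (1 : ℝ) else 0)) * (y - Finv κ))) =
      ∫ t : ℝ, (F t - if y ≤ t then (1 : ℝ) else 0) ^ 2 := by
  have hFm : Measurable F := hFcont.measurable
  have hmap : Measure.map F μ = volume.restrict (Set.Ioo 0 1) :=
    crps_map_F μ F Finv hF hFmono hFrange hFcont hInv2
  -- the pinball integrand composed with Finv on x-space
  set g : ℝ → ℝ := fun x => 2 * ((F x - if y < x then (1:ℝ) else 0) * (y - x)) with hg
  -- Step 1 : LHS = ∫ g dμ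
  have step1 : (∫ κ in Set.Ioo (0 : ℝ) 1,
        2 * ((κ - (if y < Finv κ then (1 : ℝ) else 0)) * (y - Finv κ))) = ∫ x, g x ∂μ := by
    have hFinvMono : MonotoneOn Finv (Ioo 0 1) := by
      intro a ha b hb hab
      by_contra hcon
      push_neg at hcon
      have := hFmono hcon
      rw [hInv2 a ha, hInv2 b hb] at this
      exact absurd hab (not_le.2 this)
    have hFinvae : AEMeasurable Finv (volume.restrict (Ioo (0:ℝ) 1)) :=
      aemeasurable_restrict_of_monotoneOn measurableSet_Ioo hFinvMono
    obtain ⟨G, hGm, hG⟩ := hFinvae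
    have hAESM : AEStronglyMeasurable
        (fun κ => 2 * ((κ - (if y < Finv κ then (1:ℝ) else 0)) * (y - Finv κ)))
        (volume.restrict (Ioo (0:ℝ) 1)) := by
      have hG' : Measurable (fun κ => 2 * ((κ - (if y < G κ then (1:ℝ) else 0)) * (y - G κ))) := by
        apply Measurable.const_mul
        exact ((measurable_id.sub (Measurable.ite (measurableSet_lt measurable_const hGm)
          measurable_const measurable_const)).mul (measurable_const.sub hGm))
      refine hG'.aestronglyMeasurable.congr ?_
      filter_upwards [hG] with κ hκ
      rw [hκ]
    calc (∫ κ in Set.Ioo (0 : ℝ) 1,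
        2 * ((κ - (if y < Finv κ then (1 : ℝ) else 0)) * (y - Finv κ)))
        = ∫ κ, 2 * ((κ - (if y < Finv κ then (1 : ℝ) else 0)) * (y - Finv κ))
            ∂(Measure.map F μ) := by rw [hmap]
      _ = ∫ x, 2 * ((F x - (if y < Finv (F x) then (1 : ℝ) else 0)) * (y - Finv (F x))) ∂μ := by
          rw [integral_map hFm.aemeasurable (by rwa [hmap])]
      _ = ∫ x, g x ∂μ := by
          refine integral_congr_ae (Filter.Eventually.of_forall fun x => ?_)
          simp only [hg, hInv1 x]
  -- the Fubini kernel
  set K : ℝ × ℝ → ℝ := fun p =>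
    (if p.1 ≤ p.2 ∧ p.2 < y then 2 * F p.1 else 0) +
    (if y ≤ p.2 ∧ p.2 < p.1 then 2 * (1 - F p.1) else 0) with hK
  have hKm : Measurable K := by
    apply Measurable.add
    · exact Measurable.ite ((measurableSet_le measurable_fst measurable_snd).inter
        (measurableSet_lt measurable_snd measurable_const))
        ((hFm.comp measurable_fst).const_mul 2) measurable_const
    · exact Measurable.ite ((measurableSet_le measurable_const measurable_snd).inter
        (measurableSet_lt measurable_snd measurable_fst))
        ((measurable_const.sub (hFm.comp measurable_fst)).const_mul 2) measurable_const
  have hker : ∀ x, (fun t => K (x, t)) =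
      (Ico x y).indicator (fun _ => 2 * F x) + (Ico y x).indicator (fun _ => 2 * (1 - F x)) := by
    intro x; funext t
    simp only [hK, Pi.add_apply, Set.indicator_apply, Set.mem_Ico]
  have hKnonneg : ∀ p, 0 ≤ K p := by
    intro p
    apply add_nonneg
    · split_ifs
      · have := (hFrange p.1).1; linarith
      · exact le_refl 0
    · split_ifs with h
      · have h1 := (hFrange p.1).2; linarith
      · exact le_refl 0
  have hkerint : ∀ x, Integrable (fun t => K (x, t)) volume := by
    intro x
    rw [hker x]
    exact ((integrable_indicator_iff measurableSet_Ico).2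
        (integrableOn_const measure_Ico_lt_top.ne)).add
      ((integrable_indicator_iff measurableSet_Ico).2
        (integrableOn_const measure_Ico_lt_top.ne))
  have hinner : ∀ x, ∫ t, K (x, t) = max (y - x) 0 * (2 * F x) + max (x - y) 0 * (2 * (1 - F x)) := by
    intro x
    rw [hker x]
    rw [integral_add' ((integrable_indicator_iff measurableSet_Ico).2
        (integrableOn_const measure_Ico_lt_top.ne))
      ((integrable_indicator_iff measurableSet_Ico).2
        (integrableOn_const measure_Ico_lt_top.ne)),
      integral_indicator measurableSet_Ico, integral_indicator measurableSet_Ico,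
      setIntegral_const, setIntegral_const, Real.volume_real_Ico, Real.volume_real_Ico,
      smul_eq_mul, smul_eq_mul]
  have hinner_g : ∀ x, ∫ t, K (x, t) = g x := by
    intro x
    rw [hinner x]; simp only [hg]
    rcases le_or_gt x y with hxy | hxy
    · rw [if_neg (not_lt.2 hxy), max_eq_left (by linarith), max_eq_right (by linarith)]
      ring
    · rw [if_pos hxy, max_eq_right (by linarith), max_eq_left (by linarith)]
      ring
  -- Integrability of K on the product
  have hKint : Integrable K (μ.prod volume) := by
    rw [integrable_prod_iff (hKm.stronglyMeasurable.aestronglyMeasurable)]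
    constructor
    · exact Filter.Eventually.of_forall fun x => hkerint x
    · have heq : (fun x => ∫ t, ‖K (x, t)‖) =
          fun x => max (y - x) 0 * (2 * F x) + max (x - y) 0 * (2 * (1 - F x)) := by
        funext x
        rw [← hinner x]
        refine integral_congr_ae (Filter.Eventually.of_forall fun t => ?_)
        exact Real.norm_of_nonneg (hKnonneg (x, t))
      rw [heq]
      have hcont : Continuous (fun x => max (y - x) 0 * (2 * F x) + max (x - y) 0 * (2 * (1 - F x))) := by
        fun_prop
      refine Integrable.mono' ((integrable_const (2 * |y|)).add ((hInt.abs).const_mul 2))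
        hcont.aestronglyMeasurable (Filter.Eventually.of_forall fun x => ?_)
      have h1 : 0 ≤ F x := (hFrange x).1.le
      have h2 : F x ≤ 1 := (hFrange x).2.le
      have h3 : max (y - x) 0 ≤ |y| + |x| :=
        max_le (by linarith [le_abs_self y, neg_abs_le x]) (by positivity)
      have h4 : max (x - y) 0 ≤ |y| + |x| :=
        max_le (by linarith [le_abs_self x, neg_abs_le y]) (by positivity)
      have h5 : 0 ≤ max (y - x) 0 := le_max_right _ _
      have h6 : 0 ≤ max (x - y) 0 := le_max_right _ _
      rw [Real.norm_of_nonneg (add_nonneg (mul_nonneg h5 (by linarith)) (mul_nonneg h6 (by linarith)))]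
      simp only [Pi.add_apply, id_eq, abs_abs]
      nlinarith [abs_nonneg x, abs_nonneg y]
  -- Step 2 : Fubini swap
  have step2 : ∫ x, g x ∂μ = ∫ t, ∫ x, K (x, t) ∂μ := by
    have hswap := integral_integral_swap (f := fun x t => K (x, t)) (μ := μ) (ν := volume) hKint
    rw [← hswap]
    refine integral_congr_ae (Filter.Eventually.of_forall fun x => ?_)
    exact (hinner_g x).symm
  -- Step 3 : inner integral equals the CRPS integrand
  have step3 : ∀ t, ∫ x, K (x, t) ∂μ = (F t - if y ≤ t then (1:ℝ) else 0) ^ 2 := by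
    intro t
    rcases le_or_gt y t with hyt | hyt
    · have hφm : AEStronglyMeasurable (fun u => if F t < u then 2*(1-u) else (0:ℝ))
          (Measure.map F μ) := by
        apply Measurable.aestronglyMeasurable
        exact Measurable.ite (measurableSet_lt measurable_const measurable_id)
          ((measurable_const.sub measurable_id).const_mul 2) measurable_const
      have hcongr : ∀ x, K (x, t) = (fun u => if F t < u then 2*(1-u) else (0:ℝ)) (F x) := by
        intro x
        simp only [hK]
        rw [if_neg (fun h => absurd hyt (not_le.2 h.2)), zero_add]
        exact if_congr ⟨fun h => hFmono h.2, fun h => ⟨hyt, hFmono.lt_iff_lt.1 h⟩⟩ rfl rfl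
      calc ∫ x, K (x, t) ∂μ
          = ∫ x, (fun u => if F t < u then 2*(1-u) else (0:ℝ)) (F x) ∂μ :=
            integral_congr_ae (Filter.Eventually.of_forall hcongr)
        _ = ∫ u, (if F t < u then 2*(1-u) else (0:ℝ)) ∂(Measure.map F μ) :=
            (integral_map hFm.aemeasurable hφm).symm
        _ = ∫ u in Ioo (0:ℝ) 1, (if F t < u then 2*(1-u) else 0) := by rw [hmap]
        _ = (1 - F t)^2 := crps_unif2 (hFrange t).1 (hFrange t).2
        _ = (F t - if y ≤ t then (1:ℝ) else 0)^2 := by rw [if_pos hyt]; ring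
    · have hφm : AEStronglyMeasurable (fun u => if u ≤ F t then 2*u else (0:ℝ))
          (Measure.map F μ) := by
        apply Measurable.aestronglyMeasurable
        exact Measurable.ite (measurableSet_le measurable_id measurable_const)
          (measurable_id.const_mul 2) measurable_const
      have hcongr : ∀ x, K (x, t) = (fun u => if u ≤ F t then 2*u else (0:ℝ)) (F x) := by
        intro x
        simp only [hK]
        rw [if_neg (fun (h : y ≤ t ∧ t < x) => absurd h.1 (not_le.2 hyt)), add_zero]
        exact if_congr ⟨fun h => hFmono.monotone h.1, fun h => ⟨hFmono.le_iff_le.1 h, hyt⟩⟩ rfl rfl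
      calc ∫ x, K (x, t) ∂μ
          = ∫ x, (fun u => if u ≤ F t then 2*u else (0:ℝ)) (F x) ∂μ :=
            integral_congr_ae (Filter.Eventually.of_forall hcongr)
        _ = ∫ u, (if u ≤ F t then 2*u else (0:ℝ)) ∂(Measure.map F μ) :=
            (integral_map hFm.aemeasurable hφm).symm
        _ = ∫ u in Ioo (0:ℝ) 1, (if u ≤ F t then 2*u else 0) := by rw [hmap]
        _ = (F t)^2 := crps_unif1 (hFrange t).1 (hFrange t).2
        _ = (F t - if y ≤ t then (1:ℝ) else 0)^2 := by rw [if_neg (not_le.2 hyt)]; ring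
  rw [step1, step2]
  exact integral_congr_ae (Filter.Eventually.of_forall fun t => step3 t)
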